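/- (Asymptotic orthogonality of Ramanujan subspaces) Let p \ne q be positive integers, and let x(n) be any sequence lying in the column space of the periodic extension of the Ramanujan basis of period p, and y(n) a sequence in the Ramanujan subspace of period q (i.e., x and y are linear combinations, with fixed coefficients, of shifted Ramanujan sums c_p(n-s) and c_q(n-t) respectively). Then (1/N) \sum_{n=0}^{N-1} x(n) y(n) \to 0 as N \to \infty. -/

import Mathlib

open Filter Finset

/-- The Ramanujan sum `c_p(n) = ∑_{1 ≤ k ≤ p, gcd(k,p)=1} e^{2πikn/p}`. -/
noncomputable def ramanujanSum (p : ℕ) (n : ℤ) : ℂ :=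
  ∑ k ∈ (Finset.Icc 1 p).filter (fun k => Nat.gcd k p = 1),
    Complex.exp (2 * (Real.pi : ℂ) * Complex.I * (k : ℂ) * (n : ℂ) / (p : ℂ))

/-- Cesàro average of a nontrivial geometric sequence on the unit circle tends to 0. -/
lemma geom_avg_tendsto_zero (z : ℂ) (hz1 : ‖z‖ = 1) (hz : z ≠ 1) :
    Filter.Tendsto (fun N : ℕ => (N : ℂ)⁻¹ * ∑ n ∈ Finset.range N, z ^ n)
      Filter.atTop (nhds 0) := by
  have hzne : z - 1 ≠ 0 := sub_ne_zero.mpr hz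
  have hpos : 0 < ‖z - 1‖ := by
    simpa [norm_pos_iff] using hzne
  have hb : ∀ N : ℕ, ‖(N : ℂ)⁻¹ * ∑ n ∈ Finset.range N, z ^ n‖
      ≤ (2 / ‖z - 1‖) / N := by
    intro N
    rw [norm_mul, geom_sum_eq hz N, norm_div]
    have h2 : ‖z ^ N - 1‖ ≤ 2 := by
      calc ‖z ^ N - 1‖ ≤ ‖z ^ N‖ + ‖(1 : ℂ)‖ := norm_sub_le _ _
        _ = 2 := by
          simp [norm_pow, hz1]
          norm_num
    have hnorm : ‖(N : ℂ)⁻¹‖ = ((N : ℝ))⁻¹ := by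
      simp
    rw [hnorm, div_div, inv_mul_eq_div, div_div]
    rcases Nat.eq_zero_or_pos N with h0 | h0
    · simp [h0]
    · gcongr
  apply squeeze_zero_norm hb
  exact tendsto_const_div_atTop_nhds_zero_nat _

lemma z_abs_one (p q k l : ℕ) :
    ‖Complex.exp (2 * (Real.pi : ℂ) * Complex.I * ((k : ℂ)/p + (l : ℂ)/q))‖ = 1 := by
  have h : 2 * (Real.pi : ℂ) * Complex.I * ((k : ℂ)/p + (l : ℂ)/q)
      = ((2 * Real.pi * ((k : ℝ)/p + (l : ℝ)/q) : ℝ) : ℂ) * Complex.I := by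
    push_cast; ring
  rw [h, Complex.norm_exp_ofReal_mul_I]

lemma z_ne_one (p q k l : ℕ) (hp : 0 < p) (hq : 0 < q) (hpq : p ≠ q)
    (hk : Nat.gcd k p = 1) (hl : Nat.gcd l q = 1) :
    Complex.exp (2 * (Real.pi : ℂ) * Complex.I * ((k : ℂ)/p + (l : ℂ)/q)) ≠ 1 := by
  intro h
  rw [Complex.exp_eq_one_iff] at h
  obtain ⟨m, hm⟩ := h
  have h2 : (2 * (Real.pi : ℂ) * Complex.I) ≠ 0 := by
    simp [Real.pi_ne_zero, Complex.I_ne_zero]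
  have hm' : 2 * (Real.pi : ℂ) * Complex.I * ((k : ℂ)/p + (l : ℂ)/q)
      = 2 * (Real.pi : ℂ) * Complex.I * (m : ℂ) := by rw [hm]; ring
  have heq : (k : ℂ)/p + (l : ℂ)/q = (m : ℂ) := mul_left_cancel₀ h2 hm'
  have hpc : (p : ℂ) ≠ 0 := Nat.cast_ne_zero.mpr hp.ne'
  have hqc : (q : ℂ) ≠ 0 := Nat.cast_ne_zero.mpr hq.ne'
  have heq2 : (k : ℂ) * q + (l : ℂ) * p = (m : ℂ) * p * q := by
    field_simp at heq
    linear_combination heq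
  have heqZ : (k : ℤ) * q + (l : ℤ) * p = m * p * q := by exact_mod_cast heq2
  have hdvd1 : (p : ℤ) ∣ (k : ℤ) * q := ⟨m * q - l, by linarith [heqZ]⟩
  have hdvd2 : (q : ℤ) ∣ (l : ℤ) * p := ⟨m * p - k, by linarith [heqZ]⟩
  have hd1 : p ∣ k * q := by exact_mod_cast hdvd1
  have hd2 : q ∣ l * p := by exact_mod_cast hdvd2
  have hcp : Nat.Coprime p k := (Nat.coprime_comm.mp hk)
  have hcq : Nat.Coprime q l := (Nat.coprime_comm.mp hl)
  exact hpq (Nat.dvd_antisymm (hcp.dvd_of_dvd_mul_left hd1) (hcq.dvd_of_dvd_mul_left hd2))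

theorem ramanujan_subspaces_asymptotically_orthogonal
    (p q : ℕ) (hp : 0 < p) (hq : 0 < q) (hpq : p ≠ q)
    (a : ℕ → ℝ) (b : ℕ → ℝ)
    (x : ℤ → ℂ) (y : ℤ → ℂ)
    (hx : ∀ n : ℤ, x n = ∑ s ∈ Finset.range (Nat.totient p),
        (a s : ℂ) * ramanujanSum p (n - s))
    (hy : ∀ n : ℤ, y n = ∑ t ∈ Finset.range (Nat.totient q),
        (b t : ℂ) * ramanujanSum q (n - t)) :
    Filter.Tendsto
      (fun N : ℕ => (N : ℂ)⁻¹ * ∑ n ∈ Finset.range N, x (n : ℤ) * y (n : ℤ))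
      Filter.atTop (nhds 0) := by
  classical
  set Sp := (Finset.Icc 1 p).filter (fun k => Nat.gcd k p = 1) with hSp
  set Sq := (Finset.Icc 1 q).filter (fun k => Nat.gcd k q = 1) with hSq
  set P := ((Finset.range p.totient) ×ˢ (Finset.range q.totient)) ×ˢ (Sp ×ˢ Sq) with hPdef
  set c : (ℕ × ℕ) × ℕ × ℕ → ℂ := fun w => (a w.1.1 : ℂ) * (b w.1.2 : ℂ) *
      Complex.exp (2 * (Real.pi : ℂ) * Complex.I *
        (-((w.2.1 : ℂ) * w.1.1 / p) - (w.2.2 : ℂ) * w.1.2 / q)) with hcdef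
  set z : (ℕ × ℕ) × ℕ × ℕ → ℂ := fun w =>
      Complex.exp (2 * (Real.pi : ℂ) * Complex.I * ((w.2.1 : ℂ)/p + (w.2.2 : ℂ)/q)) with hzdef
  have hpc : (p : ℂ) ≠ 0 := Nat.cast_ne_zero.mpr hp.ne'
  have hqc : (q : ℂ) ≠ 0 := Nat.cast_ne_zero.mpr hq.ne'
  have key : ∀ n : ℕ, x (n : ℤ) * y (n : ℤ) = ∑ w ∈ P, c w * (z w) ^ n := by
    intro n
    rw [hx, hy, Finset.sum_mul_sum]
    rw [hPdef]
    simp only [Finset.sum_product]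
    refine Finset.sum_congr rfl fun s _ => Finset.sum_congr rfl fun t _ => ?_
    simp only [ramanujanSum, hcdef, hzdef]
    rw [show ((a s : ℂ) * ∑ k ∈ Sp, Complex.exp (2 * (Real.pi : ℂ) * Complex.I * (k : ℂ) *
          (((n : ℤ) - (s : ℤ) : ℤ) : ℂ) / p)) *
        ((b t : ℂ) * ∑ l ∈ Sq, Complex.exp (2 * (Real.pi : ℂ) * Complex.I * (l : ℂ) *
          (((n : ℤ) - (t : ℤ) : ℤ) : ℂ) / q))
        = ((a s : ℂ) * (b t : ℂ)) *
          ((∑ k ∈ Sp, Complex.exp (2 * (Real.pi : ℂ) * Complex.I * (k : ℂ) *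
            (((n : ℤ) - (s : ℤ) : ℤ) : ℂ) / p)) *
          (∑ l ∈ Sq, Complex.exp (2 * (Real.pi : ℂ) * Complex.I * (l : ℂ) *
            (((n : ℤ) - (t : ℤ) : ℤ) : ℂ) / q))) from by ring,
      Finset.sum_mul_sum, Finset.mul_sum]
    refine Finset.sum_congr rfl fun k _ => ?_
    rw [Finset.mul_sum]
    refine Finset.sum_congr rfl fun l _ => ?_
    rw [← Complex.exp_nat_mul, ← Complex.exp_add, mul_assoc ((a s : ℂ) * (b t : ℂ)),
      ← Complex.exp_add]
    rw [show ((a s : ℂ) * (b t : ℂ)) *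
        Complex.exp (2 * (Real.pi : ℂ) * Complex.I * (-((k : ℂ) * s / p) - (l : ℂ) * t / q) +
          (n : ℂ) * (2 * (Real.pi : ℂ) * Complex.I * ((k : ℂ)/p + (l : ℂ)/q)))
        = ((a s : ℂ) * (b t : ℂ)) *
        Complex.exp (2 * (Real.pi : ℂ) * Complex.I * (-((k : ℂ) * s / p) - (l : ℂ) * t / q) +
          (n : ℂ) * (2 * (Real.pi : ℂ) * Complex.I * ((k : ℂ)/p + (l : ℂ)/q))) from rfl]
    congr 2
    push_cast
    field_simp
    ring
  have main_eq : ∀ N : ℕ,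
      (N : ℂ)⁻¹ * ∑ n ∈ Finset.range N, x (n : ℤ) * y (n : ℤ)
      = ∑ w ∈ P, c w * ((N : ℂ)⁻¹ * ∑ n ∈ Finset.range N, (z w) ^ n) := by
    intro N
    calc (N : ℂ)⁻¹ * ∑ n ∈ Finset.range N, x (n : ℤ) * y (n : ℤ)
        = (N : ℂ)⁻¹ * ∑ n ∈ Finset.range N, ∑ w ∈ P, c w * (z w) ^ n := by
          rw [Finset.sum_congr rfl fun n _ => key n]
      _ = (N : ℂ)⁻¹ * ∑ w ∈ P, ∑ n ∈ Finset.range N, c w * (z w) ^ n := by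
          rw [Finset.sum_comm]
      _ = ∑ w ∈ P, c w * ((N : ℂ)⁻¹ * ∑ n ∈ Finset.range N, (z w) ^ n) := by
          rw [Finset.mul_sum]
          refine Finset.sum_congr rfl fun w _ => ?_
          rw [← Finset.mul_sum]
          ring
  rw [show (fun N : ℕ => (N : ℂ)⁻¹ * ∑ n ∈ Finset.range N, x (n : ℤ) * y (n : ℤ))
      = fun N : ℕ => ∑ w ∈ P, c w * ((N : ℂ)⁻¹ * ∑ n ∈ Finset.range N, (z w) ^ n)
      from funext main_eq]
  have h0 : (0 : ℂ) = ∑ w ∈ P, (0 : ℂ) := by simp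
  rw [h0]
  apply tendsto_finset_sum
  intro w hw
  rw [hPdef] at hw
  have hw2 := (Finset.mem_product.mp hw).2
  have hk := (Finset.mem_product.mp hw2).1
  have hl := (Finset.mem_product.mp hw2).2
  rw [hSp, Finset.mem_filter] at hk
  rw [hSq, Finset.mem_filter] at hl
  have hgeom := geom_avg_tendsto_zero (z w) (z_abs_one p q w.2.1 w.2.2)
    (z_ne_one p q w.2.1 w.2.2 hp hq hpq hk.2 hl.2)
  simpa using hgeom.const_mul (c w)
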